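/- Let R : ℝ^n → ℝ ∪ {+∞} be proper convex lower semi-continuous and A ∈ ℝ^{p×n} have full column rank. Then for each w ∈ ℝ^p and γ > 0, the generalized proximal problem min_x γR(x) + ½‖Ax − w‖² has a unique minimizer x̂ = prox^A_{γR}(w), and the map w ↦ prox^A_{γR}(w) is Lipschitz continuous with constant ‖A‖/κ, where κ > 0 is the smallest eigenvalue of AᵀA. -/

import Mathlib

open Matrix Filter

/-- The Euclidean norm of a finitely-indexed real vector. -/
noncomputable def euclNorm {ι : Type*} [Fintype ι] (x : ι → ℝ) : ℝ :=
  Real.sqrt (∑ i, x i ^ 2)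

/-- The operator (spectral) norm of a real matrix, induced by the Euclidean norms. -/
noncomputable def matOpNorm {ι κ : Type*} [Fintype ι] [Fintype κ]
    (A : Matrix ι κ ℝ) : ℝ :=
  sSup {t : ℝ | ∃ x : κ → ℝ, euclNorm x ≤ 1 ∧ t = euclNorm (A.mulVec x)}

lemma euclNorm_nonneg {ι : Type*} [Fintype ι] (x : ι → ℝ) : 0 ≤ euclNorm x := Real.sqrt_nonneg _

lemma euclNorm_sq {ι : Type*} [Fintype ι] (x : ι → ℝ) : euclNorm x ^ 2 = ∑ i, x i ^ 2 :=
  Real.sq_sqrt (Finset.sum_nonneg fun i _ => sq_nonneg _)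

lemma euclNorm_zero {ι : Type*} [Fintype ι] : euclNorm (0 : ι → ℝ) = 0 := by
  simp [euclNorm]

lemma euclNorm_eq_zero {ι : Type*} [Fintype ι] {x : ι → ℝ} (h : euclNorm x = 0) : x = 0 := by
  have : ∑ i, x i ^ 2 = 0 := by
    have := congrArg (· ^ 2) h
    simpa [euclNorm_sq] using this
  funext i
  have := (Finset.sum_eq_zero_iff_of_nonneg (fun i _ => sq_nonneg (x i))).1 this i (Finset.mem_univ i)
  exact pow_eq_zero_iff (by norm_num) |>.1 this

lemma euclNorm_pos {ι : Type*} [Fintype ι] {x : ι → ℝ} (h : x ≠ 0) : 0 < euclNorm x :=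
  lt_of_le_of_ne (euclNorm_nonneg x) fun h' => h (euclNorm_eq_zero h'.symm)

lemma euclNorm_smul {ι : Type*} [Fintype ι] (c : ℝ) (x : ι → ℝ) :
    euclNorm (c • x) = |c| * euclNorm x := by
  unfold euclNorm
  rw [← Real.sqrt_sq_eq_abs, ← Real.sqrt_mul (sq_nonneg c)]
  congr 1
  rw [Finset.mul_sum]
  refine Finset.sum_congr rfl fun i _ => ?_
  simp [mul_pow]

lemma euclNorm_neg {ι : Type*} [Fintype ι] (x : ι → ℝ) : euclNorm (-x) = euclNorm x := by
  unfold euclNorm; congr 1; refine Finset.sum_congr rfl fun i _ => ?_; simp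

lemma dotProduct_self_eq {ι : Type*} [Fintype ι] (x : ι → ℝ) :
    x ⬝ᵥ x = euclNorm x ^ 2 := by
  rw [euclNorm_sq]; unfold dotProduct; refine Finset.sum_congr rfl fun i _ => (sq (x i)).symm

lemma le_of_sq_le_sq' {a b : ℝ} (h : a ^ 2 ≤ b ^ 2) (ha : 0 ≤ a) (hb : 0 ≤ b) : a ≤ b := by
  nlinarith

lemma dotProduct_le_euclNorm_mul {ι : Type*} [Fintype ι] (x y : ι → ℝ) :
    x ⬝ᵥ y ≤ euclNorm x * euclNorm y := by
  have h := Finset.sum_mul_sq_le_sq_mul_sq Finset.univ x y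
  have h2 : (x ⬝ᵥ y) ^ 2 ≤ (euclNorm x * euclNorm y) ^ 2 := by
    rw [mul_pow, euclNorm_sq, euclNorm_sq]; exact h
  calc x ⬝ᵥ y ≤ |x ⬝ᵥ y| := le_abs_self _
    _ ≤ euclNorm x * euclNorm y := by
        refine le_of_sq_le_sq' ?_ (abs_nonneg _) (mul_nonneg (euclNorm_nonneg _) (euclNorm_nonneg _))
        rwa [sq_abs]

/-- expansion of `‖a + t b‖²`. -/
lemma euclNorm_add_smul_sq {ι : Type*} [Fintype ι] (a b : ι → ℝ) (t : ℝ) :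
    euclNorm (a + t • b) ^ 2 = euclNorm a ^ 2 + 2 * t * (a ⬝ᵥ b) + t ^ 2 * euclNorm b ^ 2 := by
  simp only [euclNorm_sq, dotProduct]
  rw [Finset.mul_sum, Finset.mul_sum, ← Finset.sum_add_distrib, ← Finset.sum_add_distrib]
  refine Finset.sum_congr rfl fun i _ => ?_
  simp only [Pi.add_apply, Pi.smul_apply, smul_eq_mul]
  ring

lemma euclNorm_add_le {ι : Type*} [Fintype ι] (a b : ι → ℝ) :
    euclNorm (a + b) ≤ euclNorm a + euclNorm b := by
  refine le_of_sq_le_sq' ?_ (euclNorm_nonneg _) (add_nonneg (euclNorm_nonneg a) (euclNorm_nonneg b))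
  have h := euclNorm_add_smul_sq a b 1
  simp only [one_smul, one_pow, one_mul] at h
  have := dotProduct_le_euclNorm_mul a b
  nlinarith [euclNorm_nonneg a, euclNorm_nonneg b]

lemma euclNorm_midpoint_sq {ι : Type*} [Fintype ι] (a b : ι → ℝ) :
    euclNorm ((1/2 : ℝ) • a + (1/2 : ℝ) • b) ^ 2
      = 1/2 * euclNorm a ^ 2 + 1/2 * euclNorm b ^ 2 - 1/4 * euclNorm (a - b) ^ 2 := by
  simp only [euclNorm_sq]
  rw [Finset.mul_sum, Finset.mul_sum, Finset.mul_sum, ← Finset.sum_add_distrib,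
    ← Finset.sum_sub_distrib]
  refine Finset.sum_congr rfl fun i _ => ?_
  simp only [Pi.add_apply, Pi.smul_apply, Pi.sub_apply, smul_eq_mul]
  ring
lemma euclNorm_eq_norm {ι : Type*} [Fintype ι] (x : ι → ℝ) :
    euclNorm x = ‖(WithLp.equiv 2 (ι → ℝ)).symm x‖ := by
  rw [EuclideanSpace.norm_eq]
  unfold euclNorm
  congr 1
  refine Finset.sum_congr rfl fun i _ => ?_
  rw [Real.norm_eq_abs, sq_abs]
  rfl

lemma continuous_euclNorm {ι : Type*} [Fintype ι] : Continuous (euclNorm (ι := ι)) := by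
  unfold euclNorm
  exact Real.continuous_sqrt.comp (continuous_finset_sum _ fun i _ => (continuous_apply i).pow 2)

lemma isCompact_euclBall {n : ℕ} (x₀ : Fin n → ℝ) (r : ℝ) :
    IsCompact {x : Fin n → ℝ | euclNorm (x - x₀) ≤ r} := by
  have heq : {x : Fin n → ℝ | euclNorm (x - x₀) ≤ r}
      = (WithLp.equiv 2 (Fin n → ℝ)) '' (Metric.closedBall ((WithLp.equiv 2 (Fin n → ℝ)).symm x₀) r) := by
    rw [Equiv.image_eq_preimage_symm]
    ext x
    simp only [Set.mem_setOf_eq, Set.mem_preimage, Metric.mem_closedBall, dist_eq_norm]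
    rw [euclNorm_eq_norm]; exact Iff.rfl
  rw [heq]
  exact (isCompact_closedBall _ _).image (PiLp.continuous_ofLp 2 _)

lemma continuous_mulVec_affine {p n : ℕ} (A : Matrix (Fin p) (Fin n) ℝ) (w : Fin p → ℝ) :
    Continuous fun x : Fin n → ℝ => A.mulVec x - w := by
  have h1 : Continuous fun x : Fin n → ℝ => A.mulVec x := A.mulVecLin.continuous_of_finiteDimensional
  exact h1.sub continuous_const
section MatNorm
variable {ι κ' : Type*} [Fintype ι] [Fintype κ'] (A : Matrix ι κ' ℝ)

lemma matOpNorm_set_nonempty :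
    {t : ℝ | ∃ x : κ' → ℝ, euclNorm x ≤ 1 ∧ t = euclNorm (A.mulVec x)}.Nonempty :=
  ⟨euclNorm (A.mulVec 0), 0, by rw [euclNorm_zero]; norm_num⟩

lemma matOpNorm_set_bddAbove :
    BddAbove {t : ℝ | ∃ x : κ' → ℝ, euclNorm x ≤ 1 ∧ t = euclNorm (A.mulVec x)} := by
  classical
  refine ⟨Real.sqrt (∑ i, ∑ j, A i j ^ 2), ?_⟩
  rintro t ⟨x, hx, rfl⟩
  have hx2 : ∑ j, x j ^ 2 ≤ 1 := by
    have := euclNorm_sq x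
    nlinarith [euclNorm_nonneg x]
  have key : ∑ i, (A.mulVec x i) ^ 2 ≤ ∑ i, ∑ j, A i j ^ 2 := by
    refine Finset.sum_le_sum fun i _ => ?_
    have hcs := Finset.sum_mul_sq_le_sq_mul_sq Finset.univ (fun j => A i j) x
    calc (A.mulVec x i) ^ 2 = (∑ j, A i j * x j) ^ 2 := by rfl
      _ ≤ (∑ j, A i j ^ 2) * ∑ j, x j ^ 2 := hcs
      _ ≤ (∑ j, A i j ^ 2) * 1 := by
          refine mul_le_mul_of_nonneg_left hx2 (Finset.sum_nonneg fun j _ => sq_nonneg _)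
      _ = ∑ j, A i j ^ 2 := mul_one _
  calc euclNorm (A.mulVec x) = Real.sqrt (∑ i, (A.mulVec x i) ^ 2) := rfl
    _ ≤ Real.sqrt (∑ i, ∑ j, A i j ^ 2) := Real.sqrt_le_sqrt key

lemma matOpNorm_nonneg : 0 ≤ matOpNorm A := by
  have h0 : euclNorm (A.mulVec 0) ∈
      {t : ℝ | ∃ x : κ' → ℝ, euclNorm x ≤ 1 ∧ t = euclNorm (A.mulVec x)} :=
    ⟨0, by rw [euclNorm_zero]; norm_num⟩
  exact le_trans (euclNorm_nonneg _) (le_csSup (matOpNorm_set_bddAbove A) h0)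

lemma euclNorm_mulVec_le (x : κ' → ℝ) :
    euclNorm (A.mulVec x) ≤ matOpNorm A * euclNorm x := by
  rcases eq_or_ne x 0 with rfl | hx
  · simp only [Matrix.mulVec_zero, euclNorm_zero, mul_zero, le_refl]
  · have hs : 0 < euclNorm x := euclNorm_pos hx
    have hmem : euclNorm (A.mulVec ((euclNorm x)⁻¹ • x)) ∈
        {t : ℝ | ∃ y : κ' → ℝ, euclNorm y ≤ 1 ∧ t = euclNorm (A.mulVec y)} := by
      refine ⟨(euclNorm x)⁻¹ • x, ?_, rfl⟩
      rw [euclNorm_smul, abs_of_nonneg (by positivity), inv_mul_cancel₀ hs.ne']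
    have := le_csSup (matOpNorm_set_bddAbove A) hmem
    rw [Matrix.mulVec_smul, euclNorm_smul, abs_of_nonneg (by positivity)] at this
    calc euclNorm (A.mulVec x) = euclNorm x * ((euclNorm x)⁻¹ * euclNorm (A.mulVec x)) := by
          field_simp
      _ ≤ euclNorm x * matOpNorm A := by
          exact mul_le_mul_of_nonneg_left this hs.le
      _ = matOpNorm A * euclNorm x := mul_comm _ _
end MatNorm

section Spectral
variable {p n : ℕ} (A : Matrix (Fin p) (Fin n) ℝ)

lemma dot_AtA (v : Fin n → ℝ) :
    v ⬝ᵥ ((Aᵀ * A).mulVec v) = (A.mulVec v) ⬝ᵥ (A.mulVec v) := by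
  rw [← Matrix.mulVec_mulVec, Matrix.dotProduct_mulVec, Matrix.vecMul_transpose]

lemma kappa_pos (hA : Function.Injective A.mulVecLin) {κ : ℝ}
    (hκ : κ ∈ spectrum ℝ (Aᵀ * A)) : 0 < κ := by
  classical
  rw [spectrum.mem_iff] at hκ
  have hdet : (algebraMap ℝ (Matrix (Fin n) (Fin n) ℝ) κ - Aᵀ * A).det = 0 := by
    by_contra h
    exact hκ ((Matrix.isUnit_iff_isUnit_det _).2 (isUnit_iff_ne_zero.2 h))
  obtain ⟨v, hv0, hv⟩ := (Matrix.exists_mulVec_eq_zero_iff).2 hdet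
  have hBv : (Aᵀ * A).mulVec v = κ • v := by
    have h1 : (algebraMap ℝ (Matrix (Fin n) (Fin n) ℝ) κ - Aᵀ * A).mulVec v
        = κ • v - (Aᵀ * A).mulVec v := by
      rw [Matrix.sub_mulVec]
      congr 1
      funext i
      rw [Matrix.algebraMap_eq_diagonal, Matrix.mulVec_diagonal]
      simp
    rw [h1] at hv
    have := sub_eq_zero.1 hv
    exact this.symm
  have hAv0 : A.mulVec v ≠ 0 := by
    intro h
    apply hv0
    have : A.mulVecLin v = A.mulVecLin 0 := by
      rw [Matrix.mulVecLin_apply, Matrix.mulVecLin_apply, h, Matrix.mulVec_zero]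
    exact hA this
  have hpos : 0 < (A.mulVec v) ⬝ᵥ (A.mulVec v) := by
    rw [dotProduct_self_eq]
    exact pow_pos (euclNorm_pos hAv0) 2
  have hvv : 0 < v ⬝ᵥ v := by
    rw [dotProduct_self_eq]
    exact pow_pos (euclNorm_pos hv0) 2
  have hkey : κ * (v ⬝ᵥ v) = (A.mulVec v) ⬝ᵥ (A.mulVec v) := by
    rw [← dot_AtA, hBv, dotProduct_smul]
    simp [smul_eq_mul]
  nlinarith

/-- Rayleigh quotient lower bound for the smallest eigenvalue. -/
lemma rayleigh_lb {κ : ℝ} (hκ : IsLeast {t : ℝ | t ∈ spectrum ℝ (Aᵀ * A)} κ)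
    (v : Fin n → ℝ) :
    κ * (v ⬝ᵥ v) ≤ (A.mulVec v) ⬝ᵥ (A.mulVec v) := by
  classical
  set B := Aᵀ * A with hB
  have hBh : B.IsHermitian := Matrix.isHermitian_conjTranspose_mul_self A
  have halg : (algebraMap ℝ (Matrix (Fin n) (Fin n) ℝ) κ) = Matrix.diagonal (fun _ => κ) := by
    rw [Matrix.algebraMap_eq_diagonal]; rfl
  have hCh : (B - algebraMap ℝ _ κ).IsHermitian := by
    refine hBh.sub ?_
    rw [halg]
    exact Matrix.isHermitian_diagonal _
  have hpsd : (B - algebraMap ℝ _ κ).PosSemidef := by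
    apply hCh.posSemidef_iff_eigenvalues_nonneg.2
    intro i
    have hmem := hCh.eigenvalues_mem_spectrum_real i
    rw [← spectrum.sub_singleton_eq] at hmem
    obtain ⟨a, ha, b, hb, hab⟩ := Set.mem_sub.1 hmem
    rw [Set.mem_singleton_iff] at hb
    rw [← hab, hb]
    exact sub_nonneg.2 (hκ.2 ha)
  have h2 := hpsd.dotProduct_mulVec_nonneg v
  have hstar : star v = v := rfl
  rw [hstar] at h2
  have hexp : (B - algebraMap ℝ _ κ).mulVec v = B.mulVec v - κ • v := by
    rw [Matrix.sub_mulVec]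
    congr 1
    funext i
    rw [halg, Matrix.mulVec_diagonal]
    simp
  rw [hexp, dotProduct_sub, dotProduct_smul, smul_eq_mul, sub_nonneg, dot_AtA] at h2
  exact h2

end Spectral

section ERealHelpers

lemma ereal_mul_le_mul_iff {γ : ℝ} (hγ : 0 < γ) {a b : EReal} :
    (γ : EReal) * a ≤ (γ : EReal) * b ↔ a ≤ b := by
  constructor
  · intro H
    have h1 : ((γ⁻¹ : ℝ) : EReal) * ((γ : EReal) * a) ≤ ((γ⁻¹ : ℝ) : EReal) * ((γ : EReal) * b) :=
      mul_le_mul_of_nonneg_left H (by exact_mod_cast (inv_nonneg.2 hγ.le))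
    rw [← mul_assoc, ← mul_assoc, ← EReal.coe_mul, inv_mul_cancel₀ hγ.ne', EReal.coe_one,
      one_mul, one_mul] at h1
    exact h1
  · intro H
    exact mul_le_mul_of_nonneg_left H (by exact_mod_cast hγ.le)

lemma ereal_mul_lt_mul_iff {γ : ℝ} (hγ : 0 < γ) {a b : EReal} :
    (γ : EReal) * a < (γ : EReal) * b ↔ a < b := by
  rw [← not_le, ← not_le, ereal_mul_le_mul_iff hγ]

lemma ereal_coe_mul_ne_bot {γ : ℝ} (hγ : 0 < γ) {a : EReal} (ha : a ≠ ⊥) :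
    (γ : EReal) * a ≠ ⊥ := by
  induction a using EReal.rec with
  | bot => exact absurd rfl ha
  | coe r => rw [← EReal.coe_mul]; exact EReal.coe_ne_bot _
  | top =>
      rw [EReal.mul_top_of_pos (by exact_mod_cast hγ)]
      exact top_ne_bot

lemma ereal_coe_mul_ne_top_of_ne_top {γ : ℝ} (hγ : 0 < γ) {a : EReal} (ha : a ≠ ⊤) :
    (γ : EReal) * a ≠ ⊤ := by
  induction a using EReal.rec with
  | bot =>
      rw [EReal.mul_bot_of_pos (by exact_mod_cast hγ)]
      exact bot_ne_top
  | coe r => rw [← EReal.coe_mul]; exact EReal.coe_ne_top _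
  | top => exact absurd rfl ha

/-- lower semicontinuity of a positive real multiple. -/
lemma lsc_const_mul {β : Type*} [TopologicalSpace β] {R : β → EReal} (hR : LowerSemicontinuous R)
    {γ : ℝ} (hγ : 0 < γ) : LowerSemicontinuous fun x => (γ : EReal) * R x := by
  intro x c hc
  obtain ⟨d, hcd, hd⟩ := EReal.exists_between_coe_real hc
  have hd' : ((d / γ : ℝ) : EReal) < R x := by
    rw [← ereal_mul_lt_mul_iff hγ, ← EReal.coe_mul]
    have : γ * (d / γ) = d := by field_simp
    rwa [this]
  filter_upwards [hR x _ hd'] with y hy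
  calc c < (d : EReal) := hcd
    _ = (γ : EReal) * ((d / γ : ℝ) : EReal) := by
        rw [← EReal.coe_mul]; congr 1; field_simp
    _ < (γ : EReal) * R y := (ereal_mul_lt_mul_iff hγ).2 hy

/-- lower semicontinuity of `F + g` for lsc `F` (never `⊥`) and continuous real `g`. -/
lemma lsc_add_continuous {β : Type*} [TopologicalSpace β] {F : β → EReal} {g : β → ℝ}
    (hF : LowerSemicontinuous F) (hFbot : ∀ x, F x ≠ ⊥) (hg : Continuous g) :
    LowerSemicontinuous fun x => F x + (g x : EReal) := by
  intro x c hc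
  rcases eq_or_ne c ⊥ with rfl | hcbot
  · filter_upwards with y
    have : F y + (g y : EReal) ≠ ⊥ := by
      intro h
      rcases EReal.add_eq_bot_iff.1 h with h | h
      · exact hFbot y h
      · exact EReal.coe_ne_bot _ h
    exact Ne.bot_lt this
  obtain ⟨d, hcd, hd⟩ := EReal.exists_between_coe_real hc
  have hcreal : c ≠ ⊤ := ne_top_of_lt hc
  lift c to ℝ using ⟨hcreal, hcbot⟩
  have hcd' : c < d := by exact_mod_cast hcd
  have h1 : ((d - g x : ℝ) : EReal) < F x := by
    rcases eq_or_ne (F x) ⊤ with hFx | hFx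
    · rw [hFx]; exact EReal.coe_lt_top _
    · lift F x to ℝ using ⟨hFx, hFbot x⟩ with Fx hFx'
      rw [EReal.coe_lt_coe_iff]
      have : (d : EReal) < (Fx : EReal) + (g x : EReal) := hd
      rw [← EReal.coe_add, EReal.coe_lt_coe_iff] at this
      linarith
  have h2 : ∀ᶠ y in nhds x, g x - (d - c) < g y :=
    (hg.tendsto x).eventually (lt_mem_nhds (by linarith))
  filter_upwards [hF x _ h1, h2] with y hy1 hy2
  have : ((d - g x : ℝ) : EReal) + ((g x - (d - c) : ℝ) : EReal) < F y + (g y : EReal) :=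
    EReal.add_lt_add hy1 (by exact_mod_cast hy2)
  rw [← EReal.coe_add] at this
  have heq : (d - g x) + (g x - (d - c)) = c := by ring
  rwa [heq] at this

/-- a lower semicontinuous `EReal`-valued function attains its minimum on a nonempty compact. -/
lemma lsc_exists_min {β : Type*} [TopologicalSpace β] [T2Space β] {f : β → EReal}
    (hf : LowerSemicontinuous f) {s : Set β} (hs : IsCompact s) (hne : s.Nonempty) :
    ∃ x ∈ s, ∀ y ∈ s, f x ≤ f y := by
  haveI : Nonempty s := hne.to_subtype
  set K : s → Set β := fun y => {x ∈ s | f x ≤ f y} with hK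
  have hcl : ∀ y : s, IsClosed (K y) := by
    intro y
    have h1 : IsClosed {x | f x ≤ f y} := by
      have := hf.isClosed_preimage (f y)
      exact this
    exact (hs.isClosed.inter h1 : IsClosed (s ∩ {x | f x ≤ f y}))
  have hcompact : ∀ y : s, IsCompact (K y) := fun y =>
    hs.of_isClosed_subset (hcl y) fun x hx => hx.1
  have hnonempty : ∀ y : s, (K y).Nonempty := fun y => ⟨y, y.2, le_refl _⟩
  have hdir : Directed (· ⊇ ·) K := by
    intro y₁ y₂
    rcases le_total (f y₁) (f y₂) with h | h
    · exact ⟨y₁, fun x hx => hx, fun x hx => ⟨hx.1, hx.2.trans h⟩⟩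
    · exact ⟨y₂, fun x hx => ⟨hx.1, hx.2.trans h⟩, fun x hx => hx⟩
  obtain ⟨x, hx⟩ := IsCompact.nonempty_iInter_of_directed_nonempty_isCompact_isClosed
    K hdir hnonempty hcompact hcl
  rw [Set.mem_iInter] at hx
  refine ⟨x, (hx ⟨_, hne.choose_spec⟩).1, fun y hy => (hx ⟨y, hy⟩).2⟩

end ERealHelpers
/-- Existence of a minimizer of the generalized proximal problem. -/
lemma exists_prox_min {p n : ℕ}
    (R : (Fin n → ℝ) → EReal)
    (hRconv : ∀ x y : Fin n → ℝ, ∀ t : ℝ, t ∈ Set.Icc (0 : ℝ) 1 →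
        R (t • x + (1 - t) • y) ≤ (t : EReal) * R x + ((1 - t : ℝ) : EReal) * R y)
    (hRlsc : LowerSemicontinuous R)
    (hRne_bot : ∀ x, R x ≠ ⊥) {x₀ : Fin n → ℝ} (hx₀ : R x₀ ≠ ⊤)
    (A : Matrix (Fin p) (Fin n) ℝ)
    (γ : ℝ) (hγ : 0 < γ)
    (κ' : ℝ) (hκ' : 0 < κ')
    (hlow : ∀ v : Fin n → ℝ, κ' * euclNorm v ≤ euclNorm (A.mulVec v))
    (w : Fin p → ℝ) :
    ∃ xh : Fin n → ℝ, ∀ x : Fin n → ℝ,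
      (γ : EReal) * R xh + (((1 : ℝ) / 2 * euclNorm (A.mulVec xh - w) ^ 2 : ℝ) : EReal) ≤
      (γ : EReal) * R x + (((1 : ℝ) / 2 * euclNorm (A.mulVec x - w) ^ 2 : ℝ) : EReal) := by
  classical
  set q : (Fin n → ℝ) → ℝ := fun x => (1 : ℝ) / 2 * euclNorm (A.mulVec x - w) ^ 2 with hq
  set f : (Fin n → ℝ) → EReal := fun x => (γ : EReal) * R x + (q x : EReal) with hf
  have hqcont : Continuous q :=
    (continuous_const.mul (((continuous_euclNorm).comp (continuous_mulVec_affine A w)).pow 2))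
  have hfbot : ∀ x, (γ : EReal) * R x ≠ ⊥ := fun x => ereal_coe_mul_ne_bot hγ (hRne_bot x)
  have hflsc : LowerSemicontinuous f :=
    lsc_add_continuous (lsc_const_mul hRlsc hγ) hfbot hqcont
  set r₀ : ℝ := (R x₀).toReal with hr₀def
  have hr₀ : ((r₀ : ℝ) : EReal) = R x₀ := EReal.coe_toReal hx₀ (hRne_bot x₀)
  -- a uniform lower bound for R on the unit sphere around x₀
  obtain ⟨c, hcr₀, hc⟩ : ∃ c : ℝ, c ≤ r₀ ∧
      ∀ z : Fin n → ℝ, euclNorm (z - x₀) = 1 → (c : EReal) ≤ R z := by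
    rcases Set.eq_empty_or_nonempty {z : Fin n → ℝ | euclNorm (z - x₀) = 1} with hK | hKne
    · refine ⟨r₀, le_refl _, fun z hz => absurd hz ?_⟩
      exact fun h => (Set.eq_empty_iff_forall_notMem.1 hK z) h
    · have hKcl : IsClosed {z : Fin n → ℝ | euclNorm (z - x₀) = 1} := by
        have : Continuous fun z : Fin n → ℝ => euclNorm (z - x₀) :=
          continuous_euclNorm.comp (continuous_id.sub continuous_const)
        exact isClosed_eq this continuous_const
      have hKcompact : IsCompact {z : Fin n → ℝ | euclNorm (z - x₀) = 1} :=
        (isCompact_euclBall x₀ 1).of_isClosed_subset hKcl (fun z hz => le_of_eq hz)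
      obtain ⟨z₀, hz₀K, hz₀⟩ := lsc_exists_min hRlsc hKcompact hKne
      refine ⟨min (R z₀).toReal r₀, min_le_right _ _, fun z hz => ?_⟩
      rcases eq_or_ne (R z₀) ⊤ with htop | htop
      · have : R z = ⊤ := top_le_iff.1 (htop ▸ hz₀ z hz)
        rw [this]; exact le_top
      · calc ((min (R z₀).toReal r₀ : ℝ) : EReal) ≤ ((R z₀).toReal : EReal) := by
              exact_mod_cast min_le_left _ _
          _ = R z₀ := EReal.coe_toReal htop (hRne_bot z₀)
          _ ≤ R z := hz₀ z hz
  -- linear lower bound for R outside the unit ball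
  have hRlb : ∀ x : Fin n → ℝ, 1 ≤ euclNorm (x - x₀) →
      ((c * euclNorm (x - x₀) - (euclNorm (x - x₀) - 1) * r₀ : ℝ) : EReal) ≤ R x := by
    intro x hs1
    set s : ℝ := euclNorm (x - x₀) with hsdef
    have hspos : 0 < s := lt_of_lt_of_le one_pos hs1
    set t : ℝ := s⁻¹ with htdef
    have htpos : 0 < t := inv_pos.2 hspos
    have ht1 : t ≤ 1 := by
      rw [htdef]
      exact inv_le_one_of_one_le₀ hs1
    set z : Fin n → ℝ := t • x + (1 - t) • x₀ with hzdef
    have hzx₀ : z - x₀ = t • (x - x₀) := by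
      funext i
      simp only [hzdef, Pi.sub_apply, Pi.add_apply, Pi.smul_apply, smul_eq_mul]
      ring
    have hz1 : euclNorm (z - x₀) = 1 := by
      rw [hzx₀, euclNorm_smul, abs_of_pos htpos, ← hsdef]
      exact inv_mul_cancel₀ hspos.ne'
    have hchain : (c : EReal) ≤ (t : EReal) * R x + (((1 - t) * r₀ : ℝ) : EReal) := by
      refine le_trans (hc z hz1) ?_
      have := hRconv x x₀ t ⟨htpos.le, ht1⟩
      rw [← hzdef] at this
      refine le_trans this ?_
      rw [← hr₀, ← EReal.coe_mul]
    rcases eq_or_ne (R x) ⊤ with htop | htop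
    · rw [htop]; exact le_top
    · have hRx : ((R x).toReal : EReal) = R x := EReal.coe_toReal htop (hRne_bot x)
      set Rx : ℝ := (R x).toReal with hRxdef
      rw [← hRx] at hchain ⊢
      rw [← EReal.coe_mul, ← EReal.coe_add, EReal.coe_le_coe_iff] at hchain
      rw [EReal.coe_le_coe_iff]
      have hts : t * s = 1 := inv_mul_cancel₀ hspos.ne'
      nlinarith [hchain, hspos]
  set F₀ : ℝ := γ * r₀ + q x₀ with hF₀def
  have hfx₀ : f x₀ = (F₀ : EReal) := by
    rw [hf, hF₀def]
    simp only
    rw [← hr₀, ← EReal.coe_mul, ← EReal.coe_add]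
  set C : ℝ := euclNorm (A.mulVec x₀ - w) with hCdef
  set φ : ℝ → ℝ := fun s => γ * (c * s - (s - 1) * r₀) + 1 / 2 * (κ' * s - C) ^ 2 with hφdef
  have htend : Tendsto φ atTop atTop := by
    have hφeq : φ = fun s => ((κ' ^ 2 / 2) * s + (γ * (c - r₀) - κ' * C)) * s
        + (γ * r₀ + C ^ 2 / 2) := by
      funext s
      simp only [hφdef]
      ring
    rw [hφeq]
    refine tendsto_atTop_add_const_right _ _ ?_
    refine Tendsto.atTop_mul_atTop₀ ?_ tendsto_id
    refine tendsto_atTop_add_const_right _ _ ?_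
    exact Tendsto.const_mul_atTop (by positivity) tendsto_id
  obtain ⟨s₀, hs₀⟩ := eventually_atTop.1
    ((htend.eventually_gt_atTop F₀).and ((eventually_ge_atTop (1 : ℝ)).and
      (eventually_ge_atTop (C / κ' + 1))))
  set S : Set (Fin n → ℝ) := {x | f x ≤ f x₀} with hSdef
  have hx₀S : x₀ ∈ S := by
    show f x₀ ≤ f x₀
    exact le_refl _
  have hSclosed : IsClosed S := hflsc.isClosed_preimage (f x₀)
  have hSsub : S ⊆ {x : Fin n → ℝ | euclNorm (x - x₀) ≤ s₀} := by
    intro x hx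
    by_contra hcon
    simp only [Set.mem_setOf_eq, not_le] at hcon
    set s : ℝ := euclNorm (x - x₀) with hsdef
    obtain ⟨hφs, hs1, hsC⟩ := hs₀ s (le_of_lt hcon)
    -- quadratic lower bound
    have hAx : κ' * s ≤ euclNorm (A.mulVec (x - x₀)) := hlow (x - x₀)
    have htri : euclNorm (A.mulVec (x - x₀)) ≤ euclNorm (A.mulVec x - w) + C := by
      have hdecomp : A.mulVec (x - x₀) = (A.mulVec x - w) + -(A.mulVec x₀ - w) := by
        rw [Matrix.mulVec_sub]
        funext i
        simp only [Pi.sub_apply, Pi.add_apply, Pi.neg_apply]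
        ring
      rw [hdecomp]
      refine le_trans (euclNorm_add_le _ _) ?_
      rw [euclNorm_neg]
    have hCk : C + κ' ≤ κ' * s := by
      have h1 : (C / κ' + 1) * κ' ≤ s * κ' := mul_le_mul_of_nonneg_right hsC hκ'.le
      have h2 : (C / κ' + 1) * κ' = C + κ' := by field_simp
      linarith [h1, h2]
    have hpos : 0 ≤ κ' * s - C := by linarith
    have hnormlb : κ' * s - C ≤ euclNorm (A.mulVec x - w) := by linarith
    have hqlb : 1 / 2 * (κ' * s - C) ^ 2 ≤ q x := by
      rw [hq]
      simp only
      have := pow_le_pow_left₀ hpos hnormlb 2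
      linarith
    have hflb : ((φ s : ℝ) : EReal) ≤ f x := by
      have h1 : ((γ * (c * s - (s - 1) * r₀) : ℝ) : EReal) ≤ (γ : EReal) * R x := by
        rw [EReal.coe_mul]
        exact mul_le_mul_of_nonneg_left (hRlb x hs1) (by exact_mod_cast hγ.le)
      calc ((φ s : ℝ) : EReal)
          = ((γ * (c * s - (s - 1) * r₀) : ℝ) : EReal) + ((1 / 2 * (κ' * s - C) ^ 2 : ℝ) : EReal) := by
            rw [← EReal.coe_add]
        _ ≤ (γ : EReal) * R x + ((q x : ℝ) : EReal) := by
            refine add_le_add h1 ?_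
            exact_mod_cast hqlb
        _ = f x := rfl
    have : f x₀ < f x := by
      rw [hfx₀]
      calc (F₀ : EReal) < ((φ s : ℝ) : EReal) := by exact_mod_cast hφs
        _ ≤ f x := hflb
    exact absurd hx (not_le.2 this)
  have hScompact : IsCompact S :=
    (isCompact_euclBall x₀ s₀).of_isClosed_subset hSclosed hSsub
  obtain ⟨xh, hxhS, hxh⟩ := lsc_exists_min hflsc hScompact ⟨x₀, hx₀S⟩
  refine ⟨xh, fun x => ?_⟩
  by_cases hxS : x ∈ S
  · exact hxh x hxS
  · have h1 : f x₀ < f x := not_le.1 hxS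
    exact le_trans (hxh x₀ hx₀S) h1.le
section Unique
variable {p n : ℕ} (R : (Fin n → ℝ) → EReal)

/-- any minimizer has `R` value not `⊤`. -/
lemma min_R_ne_top (hRne_bot : ∀ x, R x ≠ ⊥) {x₀ : Fin n → ℝ} (hx₀ : R x₀ ≠ ⊤)
    {A : Matrix (Fin p) (Fin n) ℝ} {γ : ℝ} (hγ : 0 < γ) {w : Fin p → ℝ} {u : Fin n → ℝ}
    (hu : ∀ x : Fin n → ℝ,
      (γ : EReal) * R u + (((1 : ℝ) / 2 * euclNorm (A.mulVec u - w) ^ 2 : ℝ) : EReal) ≤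
      (γ : EReal) * R x + (((1 : ℝ) / 2 * euclNorm (A.mulVec x - w) ^ 2 : ℝ) : EReal)) :
    R u ≠ ⊤ := by
  intro htop
  have h1 := hu x₀
  rw [htop, EReal.mul_top_of_pos (by exact_mod_cast hγ : (0 : EReal) < (γ : EReal)),
    EReal.top_add_of_ne_bot (EReal.coe_ne_bot _)] at h1
  have h2 : (γ : EReal) * R x₀ + (((1 : ℝ) / 2 * euclNorm (A.mulVec x₀ - w) ^ 2 : ℝ) : EReal) ≠ ⊤ := by
    have hne : (γ : EReal) * R x₀ ≠ ⊤ := ereal_coe_mul_ne_top_of_ne_top hγ hx₀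
    have hne' : (γ : EReal) * R x₀ ≠ ⊥ := by
      intro hb
      have := EReal.coe_toReal hx₀ (hRne_bot x₀)
      rw [← this, ← EReal.coe_mul] at hb
      exact EReal.coe_ne_bot _ hb
    lift ((γ : EReal) * R x₀) to ℝ using ⟨hne, hne'⟩ with v hv
    rw [← EReal.coe_add]
    exact EReal.coe_ne_top _
  exact h2 (top_le_iff.1 h1)

/-- uniqueness of the minimizer. -/
lemma prox_min_unique
    (hRconv : ∀ x y : Fin n → ℝ, ∀ t : ℝ, t ∈ Set.Icc (0 : ℝ) 1 →
        R (t • x + (1 - t) • y) ≤ (t : EReal) * R x + ((1 - t : ℝ) : EReal) * R y)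
    (hRne_bot : ∀ x, R x ≠ ⊥) {x₀ : Fin n → ℝ} (hx₀ : R x₀ ≠ ⊤)
    {A : Matrix (Fin p) (Fin n) ℝ} (hA : Function.Injective A.mulVecLin)
    {γ : ℝ} (hγ : 0 < γ) {w : Fin p → ℝ} {y z : Fin n → ℝ}
    (hy : ∀ x : Fin n → ℝ,
      (γ : EReal) * R y + (((1 : ℝ) / 2 * euclNorm (A.mulVec y - w) ^ 2 : ℝ) : EReal) ≤
      (γ : EReal) * R x + (((1 : ℝ) / 2 * euclNorm (A.mulVec x - w) ^ 2 : ℝ) : EReal))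
    (hz : ∀ x : Fin n → ℝ,
      (γ : EReal) * R z + (((1 : ℝ) / 2 * euclNorm (A.mulVec z - w) ^ 2 : ℝ) : EReal) ≤
      (γ : EReal) * R x + (((1 : ℝ) / 2 * euclNorm (A.mulVec x - w) ^ 2 : ℝ) : EReal)) :
    y = z := by
  by_contra hne
  have hry : ((R y).toReal : EReal) = R y :=
    EReal.coe_toReal (min_R_ne_top R hRne_bot hx₀ hγ hy) (hRne_bot y)
  have hrz : ((R z).toReal : EReal) = R z :=
    EReal.coe_toReal (min_R_ne_top R hRne_bot hx₀ hγ hz) (hRne_bot z)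
  set r₁ : ℝ := (R y).toReal
  set r₂ : ℝ := (R z).toReal
  set qy : ℝ := (1 : ℝ) / 2 * euclNorm (A.mulVec y - w) ^ 2 with hqy
  set qz : ℝ := (1 : ℝ) / 2 * euclNorm (A.mulVec z - w) ^ 2 with hqz
  have hyz := hy z
  have hzy := hz y
  rw [← hry, ← hrz, ← EReal.coe_mul, ← EReal.coe_mul, ← EReal.coe_add, ← EReal.coe_add,
    EReal.coe_le_coe_iff] at hyz hzy
  have hm : γ * r₁ + qy = γ * r₂ + qz := le_antisymm hyz hzy
  -- the midpoint
  set xm : Fin n → ℝ := (1/2 : ℝ) • y + (1/2 : ℝ) • z with hxm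
  have hconv := hRconv y z (1/2) ⟨by norm_num, by norm_num⟩
  have h12 : (1 : ℝ) - 1/2 = 1/2 := by norm_num
  rw [h12] at hconv
  have hRxm : R xm ≤ (((1:ℝ)/2 * r₁ + (1:ℝ)/2 * r₂ : ℝ) : EReal) := by
    rw [← hxm] at hconv
    refine le_trans hconv ?_
    rw [← hry, ← hrz, ← EReal.coe_mul, ← EReal.coe_mul, ← EReal.coe_add]
  have hAmid : A.mulVec xm - w = (1/2 : ℝ) • (A.mulVec y - w) + (1/2 : ℝ) • (A.mulVec z - w) := by
    rw [hxm, Matrix.mulVec_add, Matrix.mulVec_smul, Matrix.mulVec_smul]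
    funext i
    simp only [Pi.sub_apply, Pi.add_apply, Pi.smul_apply, smul_eq_mul]
    ring
  have hsub : (A.mulVec y - w) - (A.mulVec z - w) = A.mulVec (y - z) := by
    rw [Matrix.mulVec_sub]
    funext i
    simp only [Pi.sub_apply]
    ring
  have hdpos : 0 < euclNorm (A.mulVec (y - z)) := by
    refine euclNorm_pos fun h0 => ?_
    have : A.mulVecLin (y - z) = A.mulVecLin 0 := by
      rw [Matrix.mulVecLin_apply, Matrix.mulVecLin_apply, h0, Matrix.mulVec_zero]
    exact hne (sub_eq_zero.1 (hA this))
  have hqmid : (1 : ℝ) / 2 * euclNorm (A.mulVec xm - w) ^ 2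
      = 1/2 * qy + 1/2 * qz - 1/8 * euclNorm (A.mulVec (y - z)) ^ 2 := by
    rw [hAmid, hqy, hqz]
    have := euclNorm_midpoint_sq (A.mulVec y - w) (A.mulVec z - w)
    rw [hsub] at this
    rw [this]
    ring
  -- strict decrease at the midpoint
  have hlt : (γ : EReal) * R xm + (((1 : ℝ) / 2 * euclNorm (A.mulVec xm - w) ^ 2 : ℝ) : EReal)
      < (γ : EReal) * R y + ((qy : ℝ) : EReal) := by
    calc (γ : EReal) * R xm + (((1 : ℝ) / 2 * euclNorm (A.mulVec xm - w) ^ 2 : ℝ) : EReal)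
        ≤ ((γ * ((1:ℝ)/2 * r₁ + (1:ℝ)/2 * r₂) : ℝ) : EReal)
          + (((1 : ℝ) / 2 * euclNorm (A.mulVec xm - w) ^ 2 : ℝ) : EReal) := by
          refine add_le_add ?_ le_rfl
          rw [EReal.coe_mul]
          exact mul_le_mul_of_nonneg_left hRxm (by exact_mod_cast hγ.le)
      _ = ((γ * ((1:ℝ)/2 * r₁ + (1:ℝ)/2 * r₂)
            + (1/2 * qy + 1/2 * qz - 1/8 * euclNorm (A.mulVec (y - z)) ^ 2) : ℝ) : EReal) := by
          rw [hqmid, ← EReal.coe_add]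
      _ < ((γ * r₁ + qy : ℝ) : EReal) := by
          rw [EReal.coe_lt_coe_iff]
          nlinarith [hdpos, sq_nonneg (euclNorm (A.mulVec (y - z)))]
      _ = (γ : EReal) * R y + ((qy : ℝ) : EReal) := by
          rw [← hry, ← EReal.coe_mul, ← EReal.coe_add]
  exact absurd (hy xm) (not_le.2 hlt)

end Unique
section Lip
variable {p n : ℕ} (R : (Fin n → ℝ) → EReal)

/-- the variational inequality satisfied by a minimizer, in real form. -/
lemma var_ineq
    (hRconv : ∀ x y : Fin n → ℝ, ∀ t : ℝ, t ∈ Set.Icc (0 : ℝ) 1 →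
        R (t • x + (1 - t) • y) ≤ (t : EReal) * R x + ((1 - t : ℝ) : EReal) * R y)
    {A : Matrix (Fin p) (Fin n) ℝ} {γ : ℝ} (hγ : 0 < γ) {w : Fin p → ℝ}
    {x₁ x₂ : Fin n → ℝ} {r₁ r₂ : ℝ} (hr₁ : ((r₁ : ℝ) : EReal) = R x₁)
    (hr₂ : ((r₂ : ℝ) : EReal) = R x₂)
    (h₁ : ∀ x : Fin n → ℝ,
      (γ : EReal) * R x₁ + (((1 : ℝ) / 2 * euclNorm (A.mulVec x₁ - w) ^ 2 : ℝ) : EReal) ≤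
      (γ : EReal) * R x + (((1 : ℝ) / 2 * euclNorm (A.mulVec x - w) ^ 2 : ℝ) : EReal)) :
    0 ≤ γ * (r₂ - r₁) + (A.mulVec x₁ - w) ⬝ᵥ (A.mulVec x₂ - A.mulVec x₁) := by
  set a : Fin p → ℝ := A.mulVec x₁ - w with ha
  set b : Fin p → ℝ := A.mulVec x₂ - A.mulVec x₁ with hb
  have key : ∀ t : ℝ, 0 < t → t ≤ 1 →
      0 ≤ γ * (r₂ - r₁) + a ⬝ᵥ b + t / 2 * euclNorm b ^ 2 := by
    intro t htpos ht1
    set xt : Fin n → ℝ := t • x₂ + (1 - t) • x₁ with hxt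
    have hconv := hRconv x₂ x₁ t ⟨htpos.le, ht1⟩
    rw [← hxt] at hconv
    have hRxt : R xt ≤ ((t * r₂ + (1 - t) * r₁ : ℝ) : EReal) := by
      refine le_trans hconv ?_
      rw [← hr₁, ← hr₂, ← EReal.coe_mul, ← EReal.coe_mul, ← EReal.coe_add]
    have hAxt : A.mulVec xt - w = a + t • b := by
      rw [hxt, Matrix.mulVec_add, Matrix.mulVec_smul, Matrix.mulVec_smul]
      funext i
      simp only [ha, hb, Pi.sub_apply, Pi.add_apply, Pi.smul_apply, smul_eq_mul]
      ring
    have hchain := h₁ xt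
    have hle : (γ : EReal) * R xt + (((1 : ℝ) / 2 * euclNorm (A.mulVec xt - w) ^ 2 : ℝ) : EReal)
        ≤ ((γ * (t * r₂ + (1 - t) * r₁) + (1 : ℝ) / 2 * euclNorm (A.mulVec xt - w) ^ 2 : ℝ) : EReal) := by
      rw [EReal.coe_add, EReal.coe_mul]
      refine add_le_add ?_ le_rfl
      exact mul_le_mul_of_nonneg_left hRxt (by exact_mod_cast hγ.le)
    have hreal : γ * r₁ + (1 : ℝ) / 2 * euclNorm a ^ 2
        ≤ γ * (t * r₂ + (1 - t) * r₁) + (1 : ℝ) / 2 * euclNorm (A.mulVec xt - w) ^ 2 := by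
      have := le_trans hchain hle
      rw [← hr₁, ← EReal.coe_mul, ← EReal.coe_add, EReal.coe_le_coe_iff] at this
      exact this
    rw [hAxt, euclNorm_add_smul_sq] at hreal
    have h0 : 0 ≤ t * (γ * (r₂ - r₁) + a ⬝ᵥ b + t / 2 * euclNorm b ^ 2) := by nlinarith
    nlinarith
  by_contra hcon
  push_neg at hcon
  set ε : ℝ := -(γ * (r₂ - r₁) + a ⬝ᵥ b) with hε
  have hεpos : 0 < ε := by simp only [hε]; linarith
  set B : ℝ := euclNorm b ^ 2 with hB
  have hBnn : 0 ≤ B := sq_nonneg _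
  set t : ℝ := min 1 (ε / (B + 1)) with ht
  have htpos : 0 < t := lt_min one_pos (by positivity)
  have ht1 : t ≤ 1 := min_le_left _ _
  have h1 := key t htpos ht1
  have h2 : t ≤ ε / (B + 1) := min_le_right _ _
  have h3 : t * (B + 1) ≤ ε := by
    rw [div_eq_mul_inv] at h2
    have := mul_le_mul_of_nonneg_right h2 (by positivity : (0:ℝ) ≤ B + 1)
    rwa [mul_assoc, inv_mul_cancel₀ (by positivity : (B:ℝ) + 1 ≠ 0), mul_one] at this
  nlinarith

lemma prox_lipschitz
    (hRconv : ∀ x y : Fin n → ℝ, ∀ t : ℝ, t ∈ Set.Icc (0 : ℝ) 1 →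
        R (t • x + (1 - t) • y) ≤ (t : EReal) * R x + ((1 - t : ℝ) : EReal) * R y)
    {A : Matrix (Fin p) (Fin n) ℝ} {γ : ℝ} (hγ : 0 < γ)
    {κ : ℝ} (hκpos : 0 < κ)
    (hray : ∀ v : Fin n → ℝ, κ * (v ⬝ᵥ v) ≤ (A.mulVec v) ⬝ᵥ (A.mulVec v))
    {w₁ w₂ x₁ x₂ : _} {r₁ r₂ : ℝ} (hr₁ : ((r₁ : ℝ) : EReal) = R x₁)
    (hr₂ : ((r₂ : ℝ) : EReal) = R x₂)
    (h₁ : ∀ x : Fin n → ℝ,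
      (γ : EReal) * R x₁ + (((1 : ℝ) / 2 * euclNorm (A.mulVec x₁ - w₁) ^ 2 : ℝ) : EReal) ≤
      (γ : EReal) * R x + (((1 : ℝ) / 2 * euclNorm (A.mulVec x - w₁) ^ 2 : ℝ) : EReal))
    (h₂ : ∀ x : Fin n → ℝ,
      (γ : EReal) * R x₂ + (((1 : ℝ) / 2 * euclNorm (A.mulVec x₂ - w₂) ^ 2 : ℝ) : EReal) ≤
      (γ : EReal) * R x + (((1 : ℝ) / 2 * euclNorm (A.mulVec x - w₂) ^ 2 : ℝ) : EReal)) :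
    euclNorm (x₁ - x₂) ≤ (matOpNorm A / κ) * euclNorm (w₁ - w₂) := by
  have hv1 := var_ineq R hRconv hγ hr₁ hr₂ h₁
  have hv2 := var_ineq R hRconv hγ hr₂ hr₁ h₂
  set u₁ : Fin p → ℝ := A.mulVec x₁ with hu₁
  set u₂ : Fin p → ℝ := A.mulVec x₂ with hu₂
  set D : Fin p → ℝ := u₂ - u₁ with hD
  -- combine the two variational inequalities
  have hkey : D ⬝ᵥ D ≤ (w₂ - w₁) ⬝ᵥ D := by
    have e1 : (u₁ - w₁) ⬝ᵥ (u₂ - u₁) = u₁ ⬝ᵥ u₂ - u₁ ⬝ᵥ u₁ - w₁ ⬝ᵥ u₂ + w₁ ⬝ᵥ u₁ := by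
      simp only [sub_dotProduct, dotProduct_sub]
      ring
    have e2 : (u₂ - w₂) ⬝ᵥ (u₁ - u₂) = u₂ ⬝ᵥ u₁ - u₂ ⬝ᵥ u₂ - w₂ ⬝ᵥ u₁ + w₂ ⬝ᵥ u₂ := by
      simp only [sub_dotProduct, dotProduct_sub]
      ring
    have e3 : D ⬝ᵥ D = u₂ ⬝ᵥ u₂ - u₂ ⬝ᵥ u₁ - u₁ ⬝ᵥ u₂ + u₁ ⬝ᵥ u₁ := by
      simp only [hD, sub_dotProduct, dotProduct_sub]
      ring
    have e4 : (w₂ - w₁) ⬝ᵥ D = w₂ ⬝ᵥ u₂ - w₂ ⬝ᵥ u₁ - w₁ ⬝ᵥ u₂ + w₁ ⬝ᵥ u₁ := by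
      simp only [hD, sub_dotProduct, dotProduct_sub]
      ring
    rw [e1] at hv1
    rw [e2] at hv2
    rw [e3, e4]
    have c1 : u₂ ⬝ᵥ u₁ = u₁ ⬝ᵥ u₂ := dotProduct_comm _ _
    linarith
  -- Cauchy-Schwarz
  have hCS : (w₂ - w₁) ⬝ᵥ D ≤ euclNorm (w₂ - w₁) * euclNorm D :=
    dotProduct_le_euclNorm_mul _ _
  set v : Fin n → ℝ := x₂ - x₁ with hv
  have hDv : D = A.mulVec v := by rw [hv, Matrix.mulVec_sub, hD, hu₁, hu₂]
  have hrayv : κ * euclNorm v ^ 2 ≤ euclNorm D ^ 2 := by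
    have := hray v
    rw [dotProduct_self_eq, dotProduct_self_eq, ← hDv] at this
    exact this
  have hop : euclNorm D ≤ matOpNorm A * euclNorm v := by
    rw [hDv]; exact euclNorm_mulVec_le A v
  have hnn1 : 0 ≤ euclNorm v := euclNorm_nonneg v
  have hnn2 : 0 ≤ euclNorm D := euclNorm_nonneg D
  have hw : euclNorm (w₂ - w₁) = euclNorm (w₁ - w₂) := by
    rw [← euclNorm_neg (w₁ - w₂)]; congr 1; funext i; simp only [Pi.neg_apply, Pi.sub_apply]; ring
  have hx12 : euclNorm (x₁ - x₂) = euclNorm v := by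
    rw [← euclNorm_neg v]; congr 1; funext i; simp only [hv, Pi.neg_apply, Pi.sub_apply]; ring
  rw [hx12]
  rcases eq_or_lt_of_le hnn1 with h0 | hvpos
  · rw [← h0]
    exact mul_nonneg (div_nonneg (matOpNorm_nonneg A) hκpos.le) (euclNorm_nonneg _)
  · -- κ ‖v‖² ≤ ‖D‖² ≤ (w₂-w₁)⬝D ≤ ‖w₂-w₁‖‖D‖ ≤ ‖w₂-w₁‖ N ‖v‖
    have hch : κ * euclNorm v ^ 2 ≤ euclNorm (w₂ - w₁) * (matOpNorm A * euclNorm v) := by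
      have hDD : euclNorm D ^ 2 ≤ euclNorm (w₂ - w₁) * euclNorm D := by
        rw [← dotProduct_self_eq]
        exact le_trans hkey hCS
      have hwnn : 0 ≤ euclNorm (w₂ - w₁) := euclNorm_nonneg _
      nlinarith
    have hfin : κ * euclNorm v ≤ euclNorm (w₁ - w₂) * matOpNorm A := by
      rw [← hw]
      nlinarith
    rw [div_mul_eq_mul_div, le_div_iff₀ hκpos]
    nlinarith
end Lip

/-- For a proper convex lower semi-continuous `R` and `A` of full column rank, the
generalized proximal problem `min_x γ R(x) + ½‖Ax − w‖²` has a unique minimizer for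
each `w`, and the minimizer map is Lipschitz with constant `‖A‖/κ`, where `κ > 0` is
the smallest eigenvalue of `AᵀA`. -/
theorem stmt18 {p n : ℕ}
    (R : (Fin n → ℝ) → EReal)
    (hRconv : ∀ x y : Fin n → ℝ, ∀ t : ℝ, t ∈ Set.Icc (0 : ℝ) 1 →
        R (t • x + (1 - t) • y) ≤ (t : EReal) * R x + ((1 - t : ℝ) : EReal) * R y)
    (hRlsc : LowerSemicontinuous R)
    (hRne_bot : ∀ x, R x ≠ ⊥) (hRproper : ∃ x, R x ≠ ⊤)
    (A : Matrix (Fin p) (Fin n) ℝ) (hA : Function.Injective A.mulVecLin)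
    (γ : ℝ) (hγ : 0 < γ)
    (κ : ℝ) (hκ : IsLeast {t : ℝ | t ∈ spectrum ℝ (Aᵀ * A)} κ) :
    0 < κ ∧
    (∀ w : Fin p → ℝ, ∃! xh : Fin n → ℝ, ∀ x : Fin n → ℝ,
      (γ : EReal) * R xh + (((1 : ℝ) / 2 * euclNorm (A.mulVec xh - w) ^ 2 : ℝ) : EReal) ≤
      (γ : EReal) * R x + (((1 : ℝ) / 2 * euclNorm (A.mulVec x - w) ^ 2 : ℝ) : EReal)) ∧
    (∀ w₁ w₂ x₁ x₂ : _,
      (∀ x : Fin n → ℝ,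
        (γ : EReal) * R x₁ + (((1 : ℝ) / 2 * euclNorm (A.mulVec x₁ - w₁) ^ 2 : ℝ) : EReal) ≤
        (γ : EReal) * R x + (((1 : ℝ) / 2 * euclNorm (A.mulVec x - w₁) ^ 2 : ℝ) : EReal)) →
      (∀ x : Fin n → ℝ,
        (γ : EReal) * R x₂ + (((1 : ℝ) / 2 * euclNorm (A.mulVec x₂ - w₂) ^ 2 : ℝ) : EReal) ≤
        (γ : EReal) * R x + (((1 : ℝ) / 2 * euclNorm (A.mulVec x - w₂) ^ 2 : ℝ) : EReal)) →
      euclNorm (x₁ - x₂) ≤ (matOpNorm A / κ) * euclNorm (w₁ - w₂)) := by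
  have hκpos : 0 < κ := kappa_pos A hA hκ.1
  have hray : ∀ v : Fin n → ℝ, κ * (v ⬝ᵥ v) ≤ (A.mulVec v) ⬝ᵥ (A.mulVec v) := rayleigh_lb A hκ
  obtain ⟨x₀, hx₀⟩ := hRproper
  refine ⟨hκpos, ?_, ?_⟩
  · intro w
    have hlow : ∀ v : Fin n → ℝ, Real.sqrt κ * euclNorm v ≤ euclNorm (A.mulVec v) := by
      intro v
      have h1 := hray v
      rw [dotProduct_self_eq, dotProduct_self_eq] at h1
      refine le_of_sq_le_sq' ?_ (mul_nonneg (Real.sqrt_nonneg _) (euclNorm_nonneg _))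
        (euclNorm_nonneg _)
      rw [mul_pow, Real.sq_sqrt hκpos.le]
      exact h1
    obtain ⟨xh, hxh⟩ := exists_prox_min R hRconv hRlsc hRne_bot hx₀ A γ hγ _
      (Real.sqrt_pos.2 hκpos) hlow w
    exact ⟨xh, hxh, fun y hy => prox_min_unique R hRconv hRne_bot hx₀ hA hγ hy hxh⟩
  · intro w₁ w₂ x₁ x₂ h₁ h₂
    have hr₁ := EReal.coe_toReal (min_R_ne_top R hRne_bot hx₀ hγ h₁) (hRne_bot x₁)
    have hr₂ := EReal.coe_toReal (min_R_ne_top R hRne_bot hx₀ hγ h₂) (hRne_bot x₂)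
    exact prox_lipschitz R hRconv hγ hκpos hray hr₁ hr₂ h₁ h₂
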